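/- Let r ≥ 3 and let K be a complete r-uniform r-partite hypergraph whose edges are colored with k colors. Then the vertex set of K can be covered by at most k monochromatic components. -/

import Mathlib

open Classical

variable {V : Type*}

/-- `e` is an edge of the complete `r`-uniform `r`-partite hypergraph with
partition `part`: it meets every class in exactly one vertex. -/
def IsPartiteEdge {r : ℕ} (part : V → Fin r) (e : Finset V) : Prop :=
  ∀ i : Fin r, (e.filter fun v => part v = i).card = 1

/-- `e` is an edge of the complete `r`-uniform `(r,ℓ)`-partite hypergraph:
an `r`-set meeting every class in at most `ℓ` vertices. -/
def IsRLEdge {r : ℕ} (part : V → Fin r) (ℓ : ℕ) (e : Finset V) : Prop :=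
  e.card = r ∧ ∀ i : Fin r, (e.filter fun v => part v = i).card ≤ ℓ

/-- An edge is friendly if it meets at most one class in exactly `ℓ` vertices. -/
def Friendly {r : ℕ} (part : V → Fin r) (ℓ : ℕ) (e : Finset V) : Prop :=
  (Finset.univ.filter fun i : Fin r => (e.filter fun v => part v = i).card = ℓ).card ≤ 1

/-- `u` and `v` lie in the same monochromatic component of color `c` of the
hypergraph with edge predicate `E` and edge coloring `χ`. -/
def MonoConn {k : ℕ} (E : Finset V → Prop) (χ : Finset V → Fin k) (c : Fin k)
    (u v : V) : Prop :=
  Relation.ReflTransGen (fun a b => ∃ e : Finset V, E e ∧ χ e = c ∧ a ∈ e ∧ b ∈ e) u v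

/-- The coloring `χ` is spanning: every vertex is incident with an edge of every color. -/
def Spanning {k : ℕ} (E : Finset V → Prop) (χ : Finset V → Fin k) : Prop :=
  ∀ v : V, ∀ c : Fin k, ∃ e : Finset V, E e ∧ χ e = c ∧ v ∈ e

/-- The vertex set can be covered by at most `m` monochromatic components. -/
def CoversBy {k : ℕ} (E : Finset V → Prop) (χ : Finset V → Fin k) (m : ℕ) : Prop :=
  ∃ f : Fin m → Fin k × V, ∀ v : V, ∃ i : Fin m, MonoConn E χ (f i).1 (f i).2 v

/-- Hamming distance of the component vectors of two vertices: the number of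
colors `c` for which they lie in different monochromatic components of color `c`. -/
noncomputable def HamDist {k : ℕ} (E : Finset V → Prop) (χ : Finset V → Fin k)
    (v w : V) : ℕ :=
  (Finset.univ.filter fun c : Fin k => ¬ MonoConn E χ c v w).card

lemma monoConn_symm {k : ℕ} {E : Finset V → Prop} {χ : Finset V → Fin k} {c : Fin k}
    {u v : V} (h : MonoConn E χ c u v) : MonoConn E χ c v u := by
  have hs : Symmetric fun a b => ∃ e : Finset V, E e ∧ χ e = c ∧ a ∈ e ∧ b ∈ e := by
    rintro a b ⟨e, he, hc, ha, hb⟩; exact ⟨e, he, hc, hb, ha⟩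
  exact (@Relation.ReflTransGen.stdSymm _ _ ⟨hs⟩).symm _ _ h

lemma isPartiteEdge_image {r : ℕ} (part : V → Fin r) (s : Fin r → V)
    (hs : ∀ i, part (s i) = i) : IsPartiteEdge part (Finset.image s Finset.univ) := by
  intro i
  have h : (Finset.image s Finset.univ).filter (fun v => part v = i) = {s i} := by
    ext v
    simp only [Finset.mem_filter, Finset.mem_image, Finset.mem_univ, true_and,
      Finset.mem_singleton]
    constructor
    · rintro ⟨⟨j, rfl⟩, hp⟩; rw [hs j] at hp; subst hp; rfl
    · rintro rfl; exact ⟨⟨i, rfl⟩, hs i⟩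
  rw [h, Finset.card_singleton]

theorem stmt_0 {r k : ℕ} [Fintype V] (hr : 3 ≤ r) (part : V → Fin r)
    (hne : ∀ i : Fin r, ∃ v, part v = i) (χ : Finset V → Fin k) :
    CoversBy (IsPartiteEdge part) χ k := by
  classical
  obtain _ | k := k
  · exact (χ ∅).elim0
  set d : Fin r → V := fun i => Classical.choose (hne i) with hdd
  have hd : ∀ i : Fin r, part (d i) = i := fun i => Classical.choose_spec (hne i)
  set i0 : Fin r := ⟨0, by omega⟩ with hi0
  set i1 : Fin r := ⟨1, by omega⟩ with hi1
  set i2 : Fin r := ⟨2, by omega⟩ with hi2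
  set a := d i0 with ha'
  set b := d i1 with hb'
  set t := d i2 with ht'
  -- every vertex lies in an edge containing `d i` for all `i ≠ part v`
  have key : ∀ v : V, ∃ e, IsPartiteEdge part e ∧ v ∈ e ∧ ∀ i, i ≠ part v → d i ∈ e := by
    intro v
    refine ⟨Finset.image (fun i => if i = part v then v else d i) Finset.univ,
      isPartiteEdge_image part _ ?_, ?_, ?_⟩
    · intro i
      by_cases h : i = part v
      · simp [h]
      · simp [h, hd]
    · exact Finset.mem_image.2 ⟨part v, Finset.mem_univ _, by simp⟩
    · intro i hi; exact Finset.mem_image.2 ⟨i, Finset.mem_univ _, by simp [hi]⟩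
  set conn := fun (c : Fin (k + 1)) (x y : V) =>
    MonoConn (IsPartiteEdge part) χ c x y with hconn
  have hsymm : ∀ c x y, conn c x y → conn c y x := fun c x y h => monoConn_symm h
  have htrans : ∀ c x y z, conn c x y → conn c y z → conn c x z :=
    fun c x y z h1 h2 => Relation.ReflTransGen.trans h1 h2
  -- each vertex is connected in a single color to at least two anchors
  have conn2 : ∀ v : V, ∃ c : Fin (k + 1),
      (conn c v a ∧ conn c v b) ∨ (conn c v a ∧ conn c v t) ∨
      (conn c v b ∧ conn c v t) := by
    intro v
    obtain ⟨e, he, hv, hi⟩ := key v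
    refine ⟨χ e, ?_⟩
    have step : ∀ x ∈ e, conn (χ e) v x := fun x hx =>
      Relation.ReflTransGen.single ⟨e, he, rfl, hv, hx⟩
    have n10 : i1 ≠ i0 := by simp [hi0, hi1, Fin.ext_iff]
    have n20 : i2 ≠ i0 := by simp [hi0, hi2, Fin.ext_iff]
    have n01 : i0 ≠ i1 := by simp [hi0, hi1, Fin.ext_iff]
    have n21 : i2 ≠ i1 := by simp [hi1, hi2, Fin.ext_iff]
    by_cases h0 : part v = i0
    · exact Or.inr (Or.inr ⟨step b (hi i1 fun h => n10 (h.trans h0)),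
        step t (hi i2 fun h => n20 (h.trans h0))⟩)
    · by_cases h1 : part v = i1
      · exact Or.inr (Or.inl ⟨step a (hi i0 fun h => n01 (h.trans h1)),
          step t (hi i2 fun h => n21 (h.trans h1))⟩)
      · exact Or.inl ⟨step a (hi i0 fun h => h0 h.symm),
          step b (hi i1 fun h => h1 h.symm)⟩
  refine ⟨fun c => (c, if conn c a b then a else if conn c a t then a else
    if conn c b t then b else a), fun v => ?_⟩
  obtain ⟨c, hcase⟩ := conn2 v
  refine ⟨c, ?_⟩
  show conn c (if conn c a b then a else if conn c a t then a else
    if conn c b t then b else a) v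
  split_ifs with h1 h2 h3
  · rcases hcase with ⟨ha, hb⟩ | ⟨ha, ht⟩ | ⟨hb, ht⟩
    · exact hsymm _ _ _ ha
    · exact hsymm _ _ _ ha
    · exact htrans _ _ _ _ h1 (hsymm _ _ _ hb)
  · rcases hcase with ⟨ha, hb⟩ | ⟨ha, ht⟩ | ⟨hb, ht⟩
    · exact hsymm _ _ _ ha
    · exact hsymm _ _ _ ha
    · exact htrans _ _ _ _ h2 (hsymm _ _ _ ht)
  · rcases hcase with ⟨ha, hb⟩ | ⟨ha, ht⟩ | ⟨hb, ht⟩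
    · exact hsymm _ _ _ hb
    · exact htrans _ _ _ _ h3 (hsymm _ _ _ ht)
    · exact hsymm _ _ _ hb
  · exfalso
    rcases hcase with ⟨ha, hb⟩ | ⟨ha, ht⟩ | ⟨hb, ht⟩
    · exact h1 (htrans _ _ _ _ (hsymm _ _ _ ha) hb)
    · exact h2 (htrans _ _ _ _ (hsymm _ _ _ ha) ht)
    · exact h3 (htrans _ _ _ _ (hsymm _ _ _ hb) ht)
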